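/- arXiv:1501.01389 — 3 statements merged into one kernel-verified Lean document; each statement's English description precedes it below -/
import Mathlib

section
/- For a morphism f : X ⟶ Y of A, viewed as an object of Arrow(A), the following are equivalent: (a) f has the lifting property against all counits: for every object g of Arrow(A) and every morphism φ : f ⟶ g in Arrow(A), there exists ψ : f ⟶ FG(g) in Arrow(A) with ψ followed by ε_g equal to φ (i.e. f is E-projective); (b) f is a split monomorphism in A, i.e. there exists r : Y ⟶ X with f ≫ r = 𝟙_X. -/
open CategoryTheory Limits

universe w v u

variable (A : Type u) [Category.{v} A] [Abelian A]

/-- The functor `F : A × A ⥤ Arrow A` sending `(X, Y)` to the object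
`biprod.inl : X ⟶ X ⊞ Y` of the arrow category. -/
@[simps]
noncomputable def ArrF : A × A ⥤ Arrow A where
  obj p := Arrow.mk (biprod.inl : p.1 ⟶ p.1 ⊞ p.2)
  map {p q} φ := Arrow.homMk (u := φ.1) (v := biprod.map φ.1 φ.2) (by simp)

/-- The forgetful functor `G : Arrow A ⥤ A × A` sending an object `f : X ⟶ Y` of the
arrow category to the pair `(X, Y)`. -/
@[simps]
def ArrG : Arrow A ⥤ A × A where
  obj f := (f.left, f.right)
  map φ := (φ.left, φ.right)

variable {A}

/-- The counit morphism `ε_f : FG(f) ⟶ f`, whose domain component is `𝟙 X` and whose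
codomain component is `biprod.desc f 𝟙 : X ⊞ Y ⟶ Y`. -/
noncomputable def arrCounit (f : Arrow A) : (ArrF A).obj ((ArrG A).obj f) ⟶ f :=
  Arrow.homMk (u := 𝟙 f.left) (v := biprod.desc f.hom (𝟙 f.right))
    (by first
      | exact (Category.id_comp _).trans (biprod.inl_desc _ _).symm
      | (dsimp [ArrF, ArrG]; simp)
      | simp [ArrF, ArrG])

/-- an object `f : X ⟶ Y` of `Arrow A` has the left lifting property
against all the counits `ε_g : FG(g) ⟶ g` (i.e. `f` is `E`-projective) if and only if
`f` is a split monomorphism in `A`, i.e. it admits a retraction. -/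
theorem statement8 (f : Arrow A) :
    (∀ (g : Arrow A) (φ : f ⟶ g),
        ∃ ψ : f ⟶ (ArrF A).obj ((ArrG A).obj g), ψ ≫ arrCounit g = φ) ↔
      ∃ r : f.right ⟶ f.left, f.hom ≫ r = 𝟙 f.left := by
  constructor
  · intro h
    obtain ⟨ψ, hψ⟩ := h f (𝟙 f)
    refine ⟨ψ.right ≫ biprod.fst, ?_⟩
    have hw : ψ.left ≫ biprod.inl = f.hom ≫ ψ.right := by
      have := ψ.w
      exact this
    have hl : ψ.left = 𝟙 f.left := by
      have := congrArg CommaMorphism.left hψ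
      exact (Category.comp_id ψ.left).symm.trans this
    erw [← Category.assoc, ← hw, hl]
    show (𝟙 f.left ≫ (biprod.inl : f.left ⟶ f.left ⊞ f.right)) ≫ biprod.fst = 𝟙 f.left
    simp
  · rintro ⟨r, hr⟩ g φ
    let pl : f.left ⟶ g.left := φ.left
    let pr : f.right ⟶ g.right := φ.right
    let gh : g.left ⟶ g.right := g.hom
    have hpl : pl = φ.left := rfl
    have hpr : pr = φ.right := rfl
    have hgh : gh = g.hom := rfl
    let v0 : f.right ⟶ g.left ⊞ g.right := biprod.lift (r ≫ pl) (pr - r ≫ pl ≫ gh)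
    have hv0 : v0 = biprod.lift (r ≫ pl) (pr - r ≫ pl ≫ gh) := rfl
    have hw : f.hom ≫ pr = pl ≫ gh := by rw [hpl, hpr, hgh]; simpa using φ.w.symm
    refine ⟨Arrow.homMk (u := pl) (v := v0) ?_, ?_⟩
    · show pl ≫ biprod.inl = f.hom ≫ v0
      rw [hv0]
      apply biprod.hom_ext
      · simp [reassoc_of% hr]
      · simp [Preadditive.comp_sub, reassoc_of% hr]
        rw [hw, sub_self]
    · ext
      · show pl ≫ 𝟙 g.left = φ.left
        simpa [arrCounit] using hpl
      · show v0 ≫ biprod.desc gh (𝟙 g.right) = pr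
        simp [hv0, Preadditive.sub_comp]
end

section
/- Let h : Z' ⟶ Z be a morphism in an abelian category A. The following are equivalent: (a) for every compatible-splitting datum (with h as right vertical map) there exist retractions r' : Y' ⟶ X' of i' and r : Y ⟶ X of i such that r' ≫ f = g ≫ r; (b) for every compatible-splitting datum (with h as right vertical map) there exist sections s' : Z' ⟶ Y' of π' and s : Z ⟶ Y of π such that s' ≫ g = h ≫ s; (c) h is a split monomorphism, i.e. there exists r : Z ⟶ Z' with h ≫ r = 𝟙_{Z'}. -/
open CategoryTheory Limits

universe v u

/-- for a morphism `h : Z' ⟶ Z` in an abelian category `A`, the following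
are equivalent: (a) every compatible-splitting datum with `h` as right vertical map
admits compatible retractions; (b) every compatible-splitting datum with `h` as right
vertical map admits compatible sections; (c) `h` is a split monomorphism. -/
theorem statement11 {A : Type u} [Category.{v} A] [Abelian A]
    {Z' Z : A} (h : Z' ⟶ Z) :
    List.TFAE [
      ∀ (X' Y' X Y : A) (i' : X' ⟶ Y') (π' : Y' ⟶ Z') (i : X ⟶ Y) (π : Y ⟶ Z)
        (f : X' ⟶ X) (g : Y' ⟶ Y) (w' : i' ≫ π' = 0) (w : i ≫ π = 0),
        (ShortComplex.mk i' π' w').ShortExact → (ShortComplex.mk i π w).ShortExact →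
        Nonempty (ShortComplex.mk i' π' w').Splitting →
        Nonempty (ShortComplex.mk i π w).Splitting →
        i' ≫ g = f ≫ i → π' ≫ h = g ≫ π →
        ∃ (r' : Y' ⟶ X') (r : Y ⟶ X), i' ≫ r' = 𝟙 X' ∧ i ≫ r = 𝟙 X ∧ r' ≫ f = g ≫ r,
      ∀ (X' Y' X Y : A) (i' : X' ⟶ Y') (π' : Y' ⟶ Z') (i : X ⟶ Y) (π : Y ⟶ Z)
        (f : X' ⟶ X) (g : Y' ⟶ Y) (w' : i' ≫ π' = 0) (w : i ≫ π = 0),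
        (ShortComplex.mk i' π' w').ShortExact → (ShortComplex.mk i π w).ShortExact →
        Nonempty (ShortComplex.mk i' π' w').Splitting →
        Nonempty (ShortComplex.mk i π w).Splitting →
        i' ≫ g = f ≫ i → π' ≫ h = g ≫ π →
        ∃ (s' : Z' ⟶ Y') (s : Z ⟶ Y), s' ≫ π' = 𝟙 Z' ∧ s ≫ π = 𝟙 Z ∧ s' ≫ g = h ≫ s,
      ∃ r : Z ⟶ Z', h ≫ r = 𝟙 Z'] := by

  open ZeroObject in
  tfae_have 3 → 1 := by
    rintro ⟨ρ, hρ⟩ X' Y' X Y i' π' i π f g w' w _ _ ⟨σ'⟩ ⟨σ⟩ comm₁ comm₂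
    set d : Y' ⟶ X := g ≫ σ.r - σ'.r ≫ f with hd_def
    have hd : i' ≫ d = 0 := by
      have h1 : i' ≫ g ≫ σ.r = f := by
        rw [← Category.assoc, comm₁, Category.assoc, σ.f_r, Category.comp_id]
      have h2 : i' ≫ σ'.r ≫ f = f := by
        rw [← Category.assoc, σ'.f_r, Category.id_comp]
      simp [hd_def, h1, h2]
    have hfac : π' ≫ (σ'.s ≫ d) = d := by
      have := σ'.id
      calc π' ≫ σ'.s ≫ d = (σ'.r ≫ i' + π' ≫ σ'.s) ≫ d := by
            rw [Preadditive.add_comp, Category.assoc, Category.assoc, hd,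
              Limits.comp_zero, zero_add]
        _ = d := by rw [this, Category.id_comp]
    refine ⟨σ'.r, σ.r - π ≫ ρ ≫ σ'.s ≫ d, σ'.f_r, ?_, ?_⟩
    · rw [Preadditive.comp_sub, σ.f_r, ← Category.assoc, w, Limits.zero_comp, sub_zero]
    · have hgπ : g ≫ π ≫ ρ ≫ σ'.s ≫ d = d := by
        simp only [← Category.assoc]
        rw [← comm₂]
        simp only [Category.assoc]
        rw [← Category.assoc h ρ, hρ, Category.id_comp, hfac]
      rw [Preadditive.comp_sub, hgπ, hd_def]
      abel
  tfae_have 3 → 2 := by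
    rintro ⟨ρ, hρ⟩ X' Y' X Y i' π' i π f g w' w _ _ ⟨σ'⟩ ⟨σ⟩ comm₁ comm₂
    set d : Z' ⟶ Y := h ≫ σ.s - σ'.s ≫ g with hd_def
    have hd : d ≫ π = 0 := by
      have h1 : (h ≫ σ.s) ≫ π = h := by rw [Category.assoc, σ.s_g, Category.comp_id]
      have h2 : (σ'.s ≫ g) ≫ π = h := by
        rw [Category.assoc, ← comm₂, ← Category.assoc, σ'.s_g, Category.id_comp]
      simp [hd_def, h1, h2]
    have hfac : (d ≫ σ.r) ≫ i = d := by
      have := σ.id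
      calc (d ≫ σ.r) ≫ i = d ≫ (σ.r ≫ i + π ≫ σ.s) := by
            rw [Preadditive.comp_add, ← Category.assoc, ← Category.assoc, hd,
              Limits.zero_comp, add_zero]
        _ = d := by rw [this, Category.comp_id]
    refine ⟨σ'.s, σ.s - ρ ≫ (d ≫ σ.r) ≫ i, σ'.s_g, ?_, ?_⟩
    · rw [Preadditive.sub_comp, σ.s_g, Category.assoc, Category.assoc, w,
        Limits.comp_zero, Limits.comp_zero, sub_zero]
    · have hh : h ≫ ρ ≫ (d ≫ σ.r) ≫ i = d := by
        rw [← Category.assoc, hρ, Category.id_comp, hfac]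
      rw [Preadditive.comp_sub, hh, hd_def]
      abel
  tfae_have 1 → 3 := by
    intro H
    have sp1 : (ShortComplex.mk (0 : (0 : A) ⟶ Z') (𝟙 Z')
        (Limits.zero_comp)).Splitting :=
      ShortComplex.Splitting.ofIsZeroOfIsIso _ (Limits.isZero_zero A) (by dsimp; infer_instance)
    have sp2 := ShortComplex.Splitting.ofHasBinaryBiproduct Z' Z
    obtain ⟨r', r, hi', hi, hc⟩ := H 0 Z' Z' (Z' ⊞ Z) 0 (𝟙 Z') biprod.inl biprod.snd 0
      (biprod.lift (-𝟙 Z') h) Limits.zero_comp (by simp)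
      sp1.shortExact sp2.shortExact ⟨sp1⟩ ⟨sp2⟩ (by simp) (by simp)
    have hc0 : biprod.lift (-𝟙 Z') h ≫ r = 0 := by
      rw [← hc, Limits.comp_zero]
    have hr : r = biprod.desc (biprod.inl ≫ r) (biprod.inr ≫ r) := by
      ext <;> simp
    rw [hr, biprod.lift_desc, hi, Preadditive.neg_comp, Category.id_comp] at hc0
    exact ⟨biprod.inr ≫ r, by rwa [neg_add_eq_zero, eq_comm] at hc0⟩
  tfae_have 2 → 3 := by
    intro H
    have sp1 : (ShortComplex.mk (0 : (0 : A) ⟶ Z') (𝟙 Z')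
        (Limits.zero_comp)).Splitting :=
      ShortComplex.Splitting.ofIsZeroOfIsIso _ (Limits.isZero_zero A) (by dsimp; infer_instance)
    have sp2 := ShortComplex.Splitting.ofHasBinaryBiproduct Z' Z
    obtain ⟨s', s, hs', hs, hc⟩ := H 0 Z' Z' (Z' ⊞ Z) 0 (𝟙 Z') biprod.inl biprod.snd 0
      (biprod.lift (𝟙 Z') h) Limits.zero_comp (by simp)
      sp1.shortExact sp2.shortExact ⟨sp1⟩ ⟨sp2⟩ (by simp) (by simp)
    have hs'1 : s' = 𝟙 Z' := by simpa using hs'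
    refine ⟨s ≫ biprod.fst, ?_⟩
    rw [← Category.assoc, ← hc, hs'1, Category.id_comp, biprod.lift_fst]
  tfae_finish
end

section
/- Let f : X' ⟶ X be a morphism in an abelian category A. The following are equivalent: (a) for every compatible-splitting datum (with f as left vertical map) there exist retractions r' : Y' ⟶ X' of i' and r : Y ⟶ X of i such that r' ≫ f = g ≫ r; (b) for every compatible-splitting datum (with f as left vertical map) there exist sections s' : Z' ⟶ Y' of π' and s : Z ⟶ Y of π such that s' ≫ g = h ≫ s; (c) f is a split epimorphism, i.e. there exists s : X ⟶ X' with s ≫ f = 𝟙_X. -/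
open CategoryTheory Limits ZeroObject

universe v u

section Aux

variable {A : Type u} [Category.{v} A] [Abelian A]

lemma aux31 {X' X : A} (f : X' ⟶ X) (s : X ⟶ X') (hs : s ≫ f = 𝟙 X)
    (Y' Z' Y Z : A) (i' : X' ⟶ Y') (π' : Y' ⟶ Z') (i : X ⟶ Y) (π : Y ⟶ Z)
    (g : Y' ⟶ Y) (w' : i' ≫ π' = 0) (w : i ≫ π = 0)
    (σ' : (ShortComplex.mk i' π' w').Splitting)
    (σ : (ShortComplex.mk i π w).Splitting)
    (hig : i' ≫ g = f ≫ i) :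
    ∃ (r' : Y' ⟶ X') (r : Y ⟶ X), i' ≫ r' = 𝟙 X' ∧ i ≫ r = 𝟙 X ∧ r' ≫ f = g ≫ r := by
  have h1 : i' ≫ σ'.r = 𝟙 X' := σ'.f_r
  have h2 : i ≫ σ.r = 𝟙 X := σ.f_r
  have hsum : σ'.r ≫ i' + π' ≫ σ'.s = 𝟙 Y' := σ'.id
  set d : Y' ⟶ X := g ≫ σ.r - σ'.r ≫ f with hd
  have hid : i' ≫ d = 0 := by
    rw [hd, Preadditive.comp_sub, ← Category.assoc, ← Category.assoc, h1, hig,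
      Category.assoc, h2, Category.id_comp, Category.comp_id, sub_self]
  have key : π' ≫ σ'.s ≫ d = d := by
    have := congrArg (· ≫ d) hsum
    simpa only [Preadditive.add_comp, Category.assoc, hid, comp_zero, zero_add,
      Category.id_comp] using this
  refine ⟨σ'.r + π' ≫ σ'.s ≫ d ≫ s, σ.r, ?_, h2, ?_⟩
  · simp only [Preadditive.comp_add, h1, reassoc_of% w', zero_comp, add_zero]
  · calc (σ'.r + π' ≫ σ'.s ≫ d ≫ s) ≫ f
        = σ'.r ≫ f + π' ≫ σ'.s ≫ d ≫ s ≫ f := by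
          simp only [Preadditive.add_comp, Category.assoc]
      _ = σ'.r ≫ f + π' ≫ σ'.s ≫ d := by rw [hs, Category.comp_id]
      _ = σ'.r ≫ f + d := by rw [key]
      _ = g ≫ σ.r := by rw [hd]; abel

lemma aux32 {X' X : A} (f : X' ⟶ X) (s : X ⟶ X') (hs : s ≫ f = 𝟙 X)
    (Y' Z' Y Z : A) (i' : X' ⟶ Y') (π' : Y' ⟶ Z') (i : X ⟶ Y) (π : Y ⟶ Z)
    (g : Y' ⟶ Y) (h : Z' ⟶ Z) (w' : i' ≫ π' = 0) (w : i ≫ π = 0)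
    (σ' : (ShortComplex.mk i' π' w').Splitting)
    (σ : (ShortComplex.mk i π w).Splitting)
    (hig : i' ≫ g = f ≫ i) (hπh : π' ≫ h = g ≫ π) :
    ∃ (s' : Z' ⟶ Y') (sZ : Z ⟶ Y), s' ≫ π' = 𝟙 Z' ∧ sZ ≫ π = 𝟙 Z ∧ s' ≫ g = h ≫ sZ := by
  have h1 : σ'.s ≫ π' = 𝟙 Z' := σ'.s_g
  have h2 : σ.s ≫ π = 𝟙 Z := σ.s_g
  have hsum : σ.r ≫ i + π ≫ σ.s = 𝟙 Y := σ.id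
  set d : Z' ⟶ Y := σ'.s ≫ g - h ≫ σ.s with hd
  have hdπ : d ≫ π = 0 := by
    rw [hd, Preadditive.sub_comp, Category.assoc, Category.assoc, ← hπh, h2,
      ← Category.assoc, h1, Category.id_comp, Category.comp_id, sub_self]
  have key : d ≫ σ.r ≫ i = d := by
    have := congrArg (d ≫ ·) hsum
    simp only [Preadditive.comp_add, Category.comp_id] at this
    rw [← Category.assoc d π σ.s, hdπ, zero_comp, add_zero] at this
    simpa using this
  refine ⟨σ'.s - (d ≫ σ.r ≫ s) ≫ i', σ.s, ?_, h2, ?_⟩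
  · simp only [Preadditive.sub_comp, h1, Category.assoc, w', comp_zero, sub_zero]
  · calc (σ'.s - (d ≫ σ.r ≫ s) ≫ i') ≫ g
        = σ'.s ≫ g - d ≫ σ.r ≫ s ≫ i' ≫ g := by
          simp only [Preadditive.sub_comp, Category.assoc]
      _ = σ'.s ≫ g - d ≫ σ.r ≫ s ≫ f ≫ i := by rw [hig]
      _ = σ'.s ≫ g - d ≫ σ.r ≫ i := by rw [reassoc_of% hs]
      _ = σ'.s ≫ g - d := by rw [key]
      _ = h ≫ σ.s := by rw [hd]; abel

end Aux

/-- for a morphism `f : X' ⟶ X` in an abelian category `A`, the following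
are equivalent: (a) every compatible-splitting datum with `f` as left vertical map
admits compatible retractions; (b) every compatible-splitting datum with `f` as left
vertical map admits compatible sections; (c) `f` is a split epimorphism. -/
theorem statement12 {A : Type u} [Category.{v} A] [Abelian A]
    {X' X : A} (f : X' ⟶ X) :
    List.TFAE [
      ∀ (Y' Z' Y Z : A) (i' : X' ⟶ Y') (π' : Y' ⟶ Z') (i : X ⟶ Y) (π : Y ⟶ Z)
        (g : Y' ⟶ Y) (h : Z' ⟶ Z) (w' : i' ≫ π' = 0) (w : i ≫ π = 0),
        (ShortComplex.mk i' π' w').ShortExact → (ShortComplex.mk i π w).ShortExact →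
        Nonempty (ShortComplex.mk i' π' w').Splitting →
        Nonempty (ShortComplex.mk i π w).Splitting →
        i' ≫ g = f ≫ i → π' ≫ h = g ≫ π →
        ∃ (r' : Y' ⟶ X') (r : Y ⟶ X), i' ≫ r' = 𝟙 X' ∧ i ≫ r = 𝟙 X ∧ r' ≫ f = g ≫ r,
      ∀ (Y' Z' Y Z : A) (i' : X' ⟶ Y') (π' : Y' ⟶ Z') (i : X ⟶ Y) (π : Y ⟶ Z)
        (g : Y' ⟶ Y) (h : Z' ⟶ Z) (w' : i' ≫ π' = 0) (w : i ≫ π = 0),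
        (ShortComplex.mk i' π' w').ShortExact → (ShortComplex.mk i π w).ShortExact →
        Nonempty (ShortComplex.mk i' π' w').Splitting →
        Nonempty (ShortComplex.mk i π w).Splitting →
        i' ≫ g = f ≫ i → π' ≫ h = g ≫ π →
        ∃ (s' : Z' ⟶ Y') (s : Z ⟶ Y), s' ≫ π' = 𝟙 Z' ∧ s ≫ π = 𝟙 Z ∧ s' ≫ g = h ≫ s,
      ∃ s : X ⟶ X', s ≫ f = 𝟙 X] := by
  have w1 : (biprod.inl : X' ⟶ X' ⊞ X) ≫ biprod.snd = 0 := by simp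
  have w2 : (𝟙 X) ≫ (0 : X ⟶ 0) = 0 := by simp
  have σ1 : (ShortComplex.mk (biprod.inl : X' ⟶ X' ⊞ X) biprod.snd w1).Splitting :=
    { r := biprod.fst, s := biprod.inr,
      f_r := by simp, s_g := by simp,
      id := by ext <;> simp }
  have σ2 : (ShortComplex.mk (𝟙 X) (0 : X ⟶ (0 : A)) w2).Splitting :=
    { r := 𝟙 X, s := 0,
      f_r := by simp, s_g := (isZero_zero A).eq_of_src _ _,
      id := by simp }
  tfae_have 3 → 1 := by
    rintro ⟨s, hs⟩ Y' Z' Y Z i' π' i π g h w' w _ _ ⟨σ'⟩ ⟨σ⟩ hig hπh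
    exact aux31 f s hs Y' Z' Y Z i' π' i π g w' w σ' σ hig
  tfae_have 3 → 2 := by
    rintro ⟨s, hs⟩ Y' Z' Y Z i' π' i π g h w' w _ _ ⟨σ'⟩ ⟨σ⟩ hig hπh
    exact aux32 f s hs Y' Z' Y Z i' π' i π g h w' w σ' σ hig hπh
  tfae_have 1 → 3 := by
    intro H
    obtain ⟨r', r, hr', hr, hcomm⟩ := H (X' ⊞ X) X X (0 : A) biprod.inl biprod.snd (𝟙 X) 0
      (biprod.desc f (𝟙 X)) 0 w1 w2 σ1.shortExact σ2.shortExact ⟨σ1⟩ ⟨σ2⟩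
      (by simp) (by simp)
    refine ⟨biprod.inr ≫ r', ?_⟩
    have hr1 : r = 𝟙 X := by simpa using hr
    rw [Category.assoc, hcomm, hr1, Category.comp_id]
    simp
  tfae_have 2 → 3 := by
    intro H
    obtain ⟨s', sZ, hs', hsZ, hcomm⟩ := H (X' ⊞ X) X X (0 : A) biprod.inl biprod.snd (𝟙 X) 0
      (biprod.desc f (𝟙 X)) 0 w1 w2 σ1.shortExact σ2.shortExact ⟨σ1⟩ ⟨σ2⟩
      (by simp) (by simp)
    refine ⟨-(s' ≫ biprod.fst), ?_⟩
    have hz : s' ≫ biprod.desc f (𝟙 X) = 0 := by rw [hcomm, zero_comp]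
    have hdec : s' ≫ biprod.desc f (𝟙 X) = s' ≫ biprod.fst ≫ f + s' ≫ biprod.snd := by
      rw [← Preadditive.comp_add]
      congr 1
      apply biprod.hom_ext' <;> simp
    rw [hdec, hs'] at hz
    have hneg : s' ≫ biprod.fst ≫ f = -𝟙 X := eq_neg_of_add_eq_zero_left hz
    rw [Preadditive.neg_comp, Category.assoc, hneg, neg_neg]
  tfae_finish
end
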